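/- Let V : ℂ^d → ℂ^n ⊗ ℂ^k be an isometry, let L(X) = [Tr_n ⊗ id_k](V X V*) be the associated quantum channel, and let L̄ be the quantum channel associated to the entrywise complex conjugate isometry V̄. Then the output of L ⊗ L̄ on the normalized maximally entangled state cannot be too mixed: ‖[L ⊗ L̄](E_d/d)‖ ≥ d/(nk). -/

import Mathlib

open scoped Kronecker ENNReal ComplexOrder
open Matrix Filter

noncomputable section

/-- A quantum state: a positive semidefinite matrix of trace 1. -/
def IsState {A : Type*} [Fintype A] (X : Matrix A A ℂ) : Prop :=
  X.PosSemidef ∧ X.trace = 1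

/-- The Choi matrix of a linear map between matrix algebras. -/
def choiMatrix {A B : Type*} [Fintype A] [DecidableEq A]
    (L : Matrix A A ℂ →ₗ[ℂ] Matrix B B ℂ) : Matrix (B × A) (B × A) ℂ :=
  ∑ i : A, ∑ j : A, (L (Matrix.single i j 1)) ⊗ₖ (Matrix.single i j 1)

/-- A quantum channel: a trace-preserving, completely positive linear map, the latter
meaning that its Choi matrix is positive semidefinite. -/
def IsChannel {A B : Type*} [Fintype A] [DecidableEq A] [Fintype B]
    (L : Matrix A A ℂ →ₗ[ℂ] Matrix B B ℂ) : Prop :=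
  (∀ X, (L X).trace = X.trace) ∧ (choiMatrix L).PosSemidef

/-- The p-Rényi entropy of a (Hermitian) matrix, p ∈ [0,∞]. -/
def renyiEntropy {B : Type*} [Fintype B] [DecidableEq B] (p : ℝ≥0∞)
    (X : Matrix B B ℂ) : ℝ :=
  if h : X.IsHermitian then
    if p = 0 then Real.log (Nat.card {i // h.eigenvalues i ≠ 0})
    else if p = 1 then -∑ i, h.eigenvalues i * Real.log (h.eigenvalues i)
    else if p = ⊤ then -Real.log (⨆ i, h.eigenvalues i)
    else (1 - p.toReal)⁻¹ * Real.log (∑ i, (h.eigenvalues i) ^ p.toReal)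
  else 0

/-- The minimum output p-Rényi entropy of a channel. -/
def minOutputEntropy {A B : Type*} [Fintype A] [Fintype B] [DecidableEq B] (p : ℝ≥0∞)
    (L : Matrix A A ℂ →ₗ[ℂ] Matrix B B ℂ) : ℝ :=
  ⨅ X : {X : Matrix A A ℂ // IsState X}, renyiEntropy p (L X.1)

/-- The r-fold tensor power of a linear map between matrix algebras, determined by
Kronecker products of matrix units. -/
def tensorPow {A B : Type*} [Fintype A] [DecidableEq A] [Fintype B]
    (L : Matrix A A ℂ →ₗ[ℂ] Matrix B B ℂ) (r : ℕ) :
    Matrix (Fin r → A) (Fin r → A) ℂ →ₗ[ℂ] Matrix (Fin r → B) (Fin r → B) ℂ where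
  toFun X := Matrix.of fun i j => ∑ a : Fin r → A, ∑ b : Fin r → A,
      X a b * ∏ m, L (Matrix.single (a m) (b m) 1) (i m) (j m)
  map_add' X Y := by
    ext i j
    simp [Matrix.add_apply, add_mul, Finset.sum_add_distrib]
  map_smul' c X := by
    ext i j
    simp [Matrix.smul_apply, smul_eq_mul, Finset.mul_sum, mul_assoc]

/-- The tensor product of two linear maps between matrix algebras, determined by
Kronecker products: (L ⊗ K)(X ⊗ Y) = L(X) ⊗ K(Y). -/
def channelTensor {A B C D : Type*} [Fintype A] [DecidableEq A] [Fintype B]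
    [Fintype C] [DecidableEq C] [Fintype D]
    (L : Matrix A A ℂ →ₗ[ℂ] Matrix B B ℂ) (K : Matrix C C ℂ →ₗ[ℂ] Matrix D D ℂ) :
    Matrix (A × C) (A × C) ℂ →ₗ[ℂ] Matrix (B × D) (B × D) ℂ where
  toFun X := Matrix.of fun i j => ∑ a : A × C, ∑ b : A × C,
      X a b * (L (Matrix.single a.1 b.1 1) i.1 j.1
        * K (Matrix.single a.2 b.2 1) i.2 j.2)
  map_add' X Y := by
    ext i j
    simp [Matrix.add_apply, add_mul, Finset.sum_add_distrib]
  map_smul' c X := by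
    ext i j
    simp [Matrix.smul_apply, smul_eq_mul, Finset.mul_sum, mul_assoc]

/-- The p-additivity rate of a channel. -/
def additivityRate {A B : Type*} [Fintype A] [DecidableEq A] [Fintype B] [DecidableEq B]
    (p : ℝ≥0∞) (L : Matrix A A ℂ →ₗ[ℂ] Matrix B B ℂ) : ℝ :=
  sSup {a : ℝ | a ∈ Set.Icc (0 : ℝ) 1 ∧
    a * minOutputEntropy p L ≤
      Filter.liminf (fun r : ℕ => minOutputEntropy p (tensorPow L r) / r) Filter.atTop}

/-- The operator norm (the norm induced by the ℓ² Euclidean norm) of a matrix. -/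
def opNorm {A : Type*} [Fintype A] [DecidableEq A] (M : Matrix A A ℂ) : ℝ :=
  ‖Matrix.toEuclideanCLM (𝕜 := ℂ) M‖

/-- Partial trace over the first tensor factor. -/
def ptraceFst {N K : Type*} [Fintype N] (M : Matrix (N × K) (N × K) ℂ) : Matrix K K ℂ :=
  Matrix.of fun i j => ∑ a : N, M (a, i) (a, j)

/-- Partial trace over the second tensor factor. -/
def ptraceSnd {N K : Type*} [Fintype K] (M : Matrix (N × K) (N × K) ℂ) : Matrix N N ℂ :=
  Matrix.of fun i j => ∑ b : K, M (i, b) (j, b)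

/-- Partial transposition of the second tensor factor. -/
def ptranspose {B Q : Type*} (M : Matrix (B × Q) (B × Q) ℂ) : Matrix (B × Q) (B × Q) ℂ :=
  Matrix.of fun p q => M (p.1, q.2) (q.1, p.2)

/-- The quantum channel associated to an isometry V : ℂ^d → ℂ^n ⊗ ℂ^k,
X ↦ [Tr_n ⊗ id_k](V X V*). -/
def channelOfIsometry {N K D : Type*} [Fintype N] [Fintype K] [Fintype D]
    (V : Matrix (N × K) D ℂ) : Matrix D D ℂ →ₗ[ℂ] Matrix K K ℂ where
  toFun X := ptraceFst (V * X * Vᴴ)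
  map_add' X Y := by
    ext i j
    simp [ptraceFst, Matrix.mul_add, Matrix.add_mul, Finset.sum_add_distrib]
  map_smul' c X := by
    ext i j
    simp [ptraceFst, Matrix.mul_smul, Matrix.smul_mul, Finset.mul_sum]

/-- The complementary channel associated to an isometry V : ℂ^d → ℂ^n ⊗ ℂ^k,
X ↦ [id_n ⊗ Tr_k](V X V*). -/
def compChannelOfIsometry {N K D : Type*} [Fintype N] [Fintype K] [Fintype D]
    (V : Matrix (N × K) D ℂ) : Matrix D D ℂ →ₗ[ℂ] Matrix N N ℂ where
  toFun X := ptraceSnd (V * X * Vᴴ)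
  map_add' X Y := by
    ext i j
    simp [ptraceSnd, Matrix.mul_add, Matrix.add_mul, Finset.sum_add_distrib]
  map_smul' c X := by
    ext i j
    simp [ptraceSnd, Matrix.mul_smul, Matrix.smul_mul, Finset.mul_sum]

/-- The Kronecker product of two isometries, regrouped so that the environment factors
come first and the output factors second. -/
def isometryTensor {N₁ K₁ D₁ N₂ K₂ D₂ : Type*}
    (V₁ : Matrix (N₁ × K₁) D₁ ℂ) (V₂ : Matrix (N₂ × K₂) D₂ ℂ) :
    Matrix ((N₁ × N₂) × (K₁ × K₂)) (D₁ × D₂) ℂ :=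
  Matrix.of fun p c => V₁ (p.1.1, p.2.1) c.1 * V₂ (p.1.2, p.2.2) c.2

end


section HWaux

private lemma HW.pf4 {α₁ α₂ β₁ β₂ R : Type*} [Fintype α₁] [Fintype α₂] [Fintype β₁]
    [Fintype β₂] [AddCommMonoid R] (f : α₁ → α₂ → β₁ → β₂ → R) :
    ∑ i : β₁, ∑ j : β₂, ∑ s : α₁, ∑ t : α₂, f s t i j
      = ∑ s : α₁, ∑ t : α₂, ∑ i : β₁, ∑ j : β₂, f s t i j := by
  calc ∑ i : β₁, ∑ j : β₂, ∑ s : α₁, ∑ t : α₂, f s t i j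
      = ∑ i : β₁, ∑ s : α₁, ∑ j : β₂, ∑ t : α₂, f s t i j :=
        Finset.sum_congr rfl fun i _ => Finset.sum_comm
    _ = ∑ s : α₁, ∑ i : β₁, ∑ j : β₂, ∑ t : α₂, f s t i j := Finset.sum_comm
    _ = ∑ s : α₁, ∑ i : β₁, ∑ t : α₂, ∑ j : β₂, f s t i j :=
        Finset.sum_congr rfl fun s _ => Finset.sum_congr rfl fun i _ => Finset.sum_comm
    _ = ∑ s : α₁, ∑ t : α₂, ∑ i : β₁, ∑ j : β₂, f s t i j :=
        Finset.sum_congr rfl fun s _ => Finset.sum_comm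

private lemma HW.perm6 {ι α N R : Type*} [Fintype ι] [Fintype α] [Fintype N]
    [AddCommMonoid R] (G : N → N → α → α → ι → ι → R) :
    ∑ i : ι, ∑ j : ι, ∑ a : α, ∑ b : α, ∑ s : N, ∑ t : N, G s t a b i j
      = ∑ s : N, ∑ t : N, ∑ a : α, ∑ b : α, ∑ i : ι, ∑ j : ι, G s t a b i j := by
  calc ∑ i : ι, ∑ j : ι, ∑ a : α, ∑ b : α, ∑ s : N, ∑ t : N, G s t a b i j
      = ∑ i : ι, ∑ j : ι, ∑ s : N, ∑ t : N, ∑ a : α, ∑ b : α, G s t a b i j :=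
        Finset.sum_congr rfl fun i _ => Finset.sum_congr rfl fun j _ =>
          HW.pf4 (fun s t a b => G s t a b i j)
    _ = ∑ s : N, ∑ t : N, ∑ i : ι, ∑ j : ι, ∑ a : α, ∑ b : α, G s t a b i j :=
        HW.pf4 (fun s t i j => ∑ a : α, ∑ b : α, G s t a b i j)
    _ = ∑ s : N, ∑ t : N, ∑ a : α, ∑ b : α, ∑ i : ι, ∑ j : ι, G s t a b i j :=
        Finset.sum_congr rfl fun s _ => Finset.sum_congr rfl fun t _ =>
          HW.pf4 (fun a b i j => G s t a b i j)

private lemma HW.key {ι α N : Type*} [Fintype ι] [Fintype α] [Fintype N]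
    (p q : N → ι → α → ℂ) :
    ∑ i : ι, ∑ j : ι, ∑ a : α, ∑ b : α,
        (∑ s : N, p s i a * q s j b) * (∑ t : N, q t i a * p t j b)
      = ∑ s : N, ∑ t : N,
          (∑ a : α, ∑ i : ι, p s i a * q t i a) * (∑ b : α, ∑ j : ι, q s j b * p t j b) := by
  calc ∑ i : ι, ∑ j : ι, ∑ a : α, ∑ b : α,
        (∑ s : N, p s i a * q s j b) * (∑ t : N, q t i a * p t j b)
      = ∑ i : ι, ∑ j : ι, ∑ a : α, ∑ b : α, ∑ s : N, ∑ t : N,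
          (p s i a * q s j b) * (q t i a * p t j b) := by
        simp only [Finset.sum_mul_sum]
    _ = ∑ s : N, ∑ t : N, ∑ a : α, ∑ b : α, ∑ i : ι, ∑ j : ι,
          (p s i a * q s j b) * (q t i a * p t j b) :=
        HW.perm6 (fun s t a b i j => (p s i a * q s j b) * (q t i a * p t j b))
    _ = ∑ s : N, ∑ t : N,
          (∑ a : α, ∑ i : ι, p s i a * q t i a) * (∑ b : α, ∑ j : ι, q s j b * p t j b) := by
        refine Finset.sum_congr rfl fun s _ => Finset.sum_congr rfl fun t _ => ?_
        simp only [Finset.sum_mul_sum]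
        exact Finset.sum_congr rfl fun a _ => Finset.sum_congr rfl fun b _ =>
          Finset.sum_congr rfl fun i _ => Finset.sum_congr rfl fun j _ => by ring

private lemma HW.chan_entry {N K D : Type*} [Fintype N] [Fintype K] [Fintype D]
    [DecidableEq D] (V : Matrix (N × K) D ℂ) (a b : D) (i j : K) :
    channelOfIsometry V (Matrix.single a b 1) i j
      = ∑ s, V (s, i) a * star (V (s, j) b) := by
  simp only [channelOfIsometry, LinearMap.coe_mk, AddHom.coe_mk, ptraceFst, Matrix.of_apply,
    Matrix.mul_apply, Matrix.conjTranspose_apply]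
  refine Finset.sum_congr rfl fun s _ => ?_
  simp [Matrix.single, ite_and, mul_ite, Finset.sum_ite_eq, Finset.sum_ite_eq']

end HWaux

/-- the Hayden–Winter bound: the output of L ⊗ L̄ on the normalized
maximally entangled state satisfies ‖[L ⊗ L̄](E_d/d)‖ ≥ d/(nk). -/
theorem hayden_winter_bound (n k d : ℕ)
    (V : Matrix (Fin n × Fin k) (Fin d) ℂ) (hV : Vᴴ * V = 1) :
    (d : ℝ) / ((n : ℝ) * (k : ℝ)) ≤
      opNorm (channelTensor (channelOfIsometry V)
        (channelOfIsometry (V.map (starRingEnd ℂ)))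
        (((d : ℂ))⁻¹ • Matrix.of fun p q =>
          if p.1 = p.2 ∧ q.1 = q.2 then (1 : ℂ) else 0)) := by
  classical
  rcases Nat.eq_zero_or_pos d with hd0 | hd0
  · have h0 : (d : ℝ) / ((n : ℝ) * (k : ℝ)) = 0 := by rw [hd0]; simp
    rw [h0]
    simp only [opNorm]
    exact norm_nonneg _
  set A : Matrix (Fin k × Fin k) (Fin k × Fin k) ℂ :=
    channelTensor (channelOfIsometry V) (channelOfIsometry (V.map (starRingEnd ℂ)))
      (((d : ℂ))⁻¹ • Matrix.of fun p q => if p.1 = p.2 ∧ q.1 = q.2 then (1 : ℂ) else 0)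
    with hAdef
  simp only [opNorm]
  have htr : ((Vᴴ * V).trace : ℂ) = (d : ℂ) := by rw [hV]; simp
  have hn0 : 0 < n := by
    rcases Nat.eq_zero_or_pos n with h | h
    · exfalso
      haveI : IsEmpty (Fin n) := by subst h; infer_instance
      have h2 : ((Vᴴ * V).trace : ℂ) = 0 := by
        simp [Matrix.trace, Matrix.diag, Matrix.mul_apply, Fintype.sum_prod_type]
      rw [htr] at h2
      exact absurd (Nat.cast_eq_zero.mp h2) hd0.ne'
    · exact h
  have hk0 : 0 < k := by
    rcases Nat.eq_zero_or_pos k with h | h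
    · exfalso
      haveI : IsEmpty (Fin k) := by subst h; infer_instance
      have h2 : ((Vᴴ * V).trace : ℂ) = 0 := by
        simp [Matrix.trace, Matrix.diag, Matrix.mul_apply, Fintype.sum_prod_type]
      rw [htr] at h2
      exact absurd (Nat.cast_eq_zero.mp h2) hd0.ne'
    · exact h
  have hA : ∀ p q : Fin k × Fin k, A p q = (d:ℂ)⁻¹ * ∑ a : Fin d, ∑ b : Fin d,
      (∑ s, V (s, p.1) a * star (V (s, q.1) b)) * (∑ t, star (V (t, p.2) a) * V (t, q.2) b) := by
    intro p q
    rw [hAdef]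
    simp only [channelTensor, LinearMap.coe_mk, AddHom.coe_mk, Matrix.of_apply,
      Matrix.smul_apply, smul_eq_mul, HW.chan_entry, Matrix.map_apply]
    simp only [Complex.star_def, Complex.conj_conj, Fintype.sum_prod_type, ite_and,
      mul_ite, ite_mul, one_mul, zero_mul, mul_zero, mul_one, Finset.sum_ite_eq,
      Finset.sum_ite_eq', Finset.mem_univ, if_true, Finset.sum_ite_irrel, Finset.sum_const_zero,
      Finset.mul_sum]
  -- the matrix c = ptraceSnd (V * Vᴴ)
  set c : Fin n → Fin n → ℂ :=
    fun s t => ∑ a : Fin d, ∑ i : Fin k, V (s, i) a * star (V (t, i) a) with hc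
  have hstar : ∀ s t, star (c s t) = ∑ b : Fin d, ∑ j : Fin k, star (V (s, j) b) * V (t, j) b := by
    intro s t
    simp [hc, star_sum, star_mul', star_star]
  have hS : ∑ i : Fin k, ∑ j : Fin k, A (i, i) (j, j)
      = (d : ℂ)⁻¹ * ∑ s, ∑ t, c s t * star (c s t) := by
    have e1 := HW.key (N := Fin n) (ι := Fin k) (α := Fin d)
      (fun s i a => V (s, i) a) (fun s i a => star (V (s, i) a))
    calc ∑ i : Fin k, ∑ j : Fin k, A (i, i) (j, j)
        = (d : ℂ)⁻¹ * ∑ i : Fin k, ∑ j : Fin k, ∑ a : Fin d, ∑ b : Fin d,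
            (∑ s, V (s, i) a * star (V (s, j) b)) * (∑ t, star (V (t, i) a) * V (t, j) b) := by
          simp only [hA]
          simp only [Finset.mul_sum]
      _ = (d : ℂ)⁻¹ * ∑ s, ∑ t, c s t * star (c s t) := by
          rw [e1]
          congr 1
          refine Finset.sum_congr rfl fun s _ => Finset.sum_congr rfl fun t _ => ?_
          rw [hstar]
  -- real form
  set Sig : ℝ := ∑ s, ∑ t, Complex.normSq (c s t) with hSig
  have hS2 : ∑ i : Fin k, ∑ j : Fin k, A (i, i) (j, j) = (((d : ℝ)⁻¹ * Sig : ℝ) : ℂ) := by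
    rw [hS]
    have : ∀ s t : Fin n, c s t * star (c s t) = ((Complex.normSq (c s t) : ℝ) : ℂ) := by
      intro s t
      rw [Complex.star_def, Complex.mul_conj]
    simp only [this, hSig]
    push_cast
    ring
  -- test vector
  set ψ : EuclideanSpace ℂ (Fin k × Fin k) :=
    WithLp.toLp 2 (fun p : Fin k × Fin k => if p.1 = p.2 then (1 : ℂ) else 0) with hψ
  set T := Matrix.toEuclideanCLM (𝕜 := ℂ) A with hT
  have hTψ : ∀ p₀ : Fin k × Fin k, T ψ p₀ = ∑ q₀, A p₀ q₀ * ψ q₀ := by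
    intro p₀
    have h := Matrix.ofLp_toEuclideanCLM (𝕜 := ℂ) A ψ
    have h2 : T ψ p₀ = (A *ᵥ WithLp.ofLp ψ) p₀ := congrFun h p₀
    rw [h2]
    simp [Matrix.mulVec, dotProduct]
  have hinner : (inner ℂ ψ (T ψ) : ℂ) = ∑ i : Fin k, ∑ j : Fin k, A (i, i) (j, j) := by
    rw [PiLp.inner_apply]
    simp only [RCLike.inner_apply, hTψ]
    simp [hψ, Fintype.sum_prod_type, ite_mul, mul_ite, apply_ite (starRingEnd ℂ),
      Finset.sum_ite_eq, Finset.sum_ite_eq', _root_.map_one, _root_.map_zero, one_mul, zero_mul,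
      mul_zero, mul_one, Finset.sum_ite_irrel, Finset.sum_const_zero, Finset.mul_sum]
  have hψψ : (inner ℂ ψ ψ : ℂ) = (k : ℂ) := by
    rw [PiLp.inner_apply]
    simp [hψ, RCLike.inner_apply, Fintype.sum_prod_type, apply_ite (starRingEnd ℂ),
      Finset.sum_ite_eq, ite_mul, mul_ite, Finset.sum_ite_irrel, Finset.sum_const_zero]
    simp [apply_ite (norm : ℂ → ℝ), apply_ite (fun x : ℝ => (x : ℂ)), ite_pow, Finset.sum_ite_eq]
  have hψnorm : ‖ψ‖ * ‖ψ‖ = (k : ℝ) := by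
    have h := inner_self_eq_norm_mul_norm (𝕜 := ℂ) (x := ψ)
    rw [hψψ] at h
    simpa using h.symm
  -- positivity facts
  have hdp : (0 : ℝ) < d := by exact_mod_cast hd0
  have hnp : (0 : ℝ) < n := by exact_mod_cast hn0
  have hkp : (0 : ℝ) < k := by exact_mod_cast hk0
  have hSignn : 0 ≤ Sig := by
    refine Finset.sum_nonneg fun s _ => Finset.sum_nonneg fun t _ => Complex.normSq_nonneg _
  -- the operator norm bound
  have hre : (d : ℝ)⁻¹ * Sig ≤ ‖T‖ * (k : ℝ) := by
    have h1 : ‖(inner ℂ ψ (T ψ) : ℂ)‖ ≤ ‖ψ‖ * ‖T ψ‖ := norm_inner_le_norm _ _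
    have h2 : ‖T ψ‖ ≤ ‖T‖ * ‖ψ‖ := T.le_opNorm ψ
    have h3 : ‖(inner ℂ ψ (T ψ) : ℂ)‖ = (d : ℝ)⁻¹ * Sig := by
      rw [hinner, hS2]
      rw [Complex.norm_real]
      exact abs_of_nonneg (by positivity)
    calc (d : ℝ)⁻¹ * Sig = ‖(inner ℂ ψ (T ψ) : ℂ)‖ := h3.symm
      _ ≤ ‖ψ‖ * ‖T ψ‖ := h1
      _ ≤ ‖ψ‖ * (‖T‖ * ‖ψ‖) := by
          exact mul_le_mul_of_nonneg_left h2 (norm_nonneg _)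
      _ = ‖T‖ * (‖ψ‖ * ‖ψ‖) := by ring
      _ = ‖T‖ * (k : ℝ) := by rw [hψnorm]
  -- diagonal of c
  set r : Fin n → ℝ :=
    fun s => ∑ a : Fin d, ∑ i : Fin k, Complex.normSq (V (s, i) a) with hr
  have hcss : ∀ s, c s s = ((r s : ℝ) : ℂ) := by
    intro s
    simp [hc, hr, Complex.star_def, Complex.mul_conj, Complex.ofReal_sum]
  have hrsum : ∑ s, r s = (d : ℝ) := by
    have h1 : ((∑ s, r s : ℝ) : ℂ) = (d : ℂ) := by
      rw [← htr]
      have h2 : (Vᴴ * V).trace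
          = ((∑ a : Fin d, ∑ s : Fin n, ∑ i : Fin k, Complex.normSq (V (s, i) a) : ℝ) : ℂ) := by
        simp only [Matrix.trace, Matrix.diag, Matrix.mul_apply, Matrix.conjTranspose_apply,
          Fintype.sum_prod_type, Complex.ofReal_sum]
        refine Finset.sum_congr rfl fun a _ => Finset.sum_congr rfl fun s _ =>
          Finset.sum_congr rfl fun i _ => ?_
        rw [mul_comm]
        simp [Complex.star_def, Complex.mul_conj]
      rw [h2]
      norm_cast
      simp only [hr]
      rw [Finset.sum_comm]
    exact_mod_cast h1
  have hcheb : (d : ℝ) ^ 2 ≤ (n : ℝ) * ∑ s, (r s) ^ 2 := by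
    have h := sq_sum_le_card_mul_sum_sq (s := (Finset.univ : Finset (Fin n))) (f := r)
    rw [hrsum] at h
    simpa using h
  have hdiag : ∑ s, (r s) ^ 2 ≤ Sig := by
    rw [hSig]
    refine Finset.sum_le_sum fun s _ => ?_
    have h1 : (r s) ^ 2 = Complex.normSq (c s s) := by
      rw [hcss s, Complex.normSq_ofReal]
      ring
    rw [h1]
    exact Finset.single_le_sum (fun t _ => Complex.normSq_nonneg _) (Finset.mem_univ s)
  have hSigLB : (d : ℝ) ^ 2 ≤ (n : ℝ) * Sig :=
    le_trans hcheb (mul_le_mul_of_nonneg_left hdiag hnp.le)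
  have h4 : Sig ≤ (d : ℝ) * (‖T‖ * (k : ℝ)) := by
    have h5 := mul_le_mul_of_nonneg_left hre hdp.le
    rwa [← mul_assoc, mul_inv_cancel₀ hdp.ne', one_mul] at h5
  rw [div_le_iff₀ (by positivity)]
  nlinarith [hSigLB, h4, hdp, hnp, norm_nonneg T]
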